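/- If f = g1·g2 is any nontrivial factorization in ℂ[x] (both factors of positive degree) with deg f = d, then ht(g1)·ht(g2) ≤ (2/3)·C(d, ⌊d/2⌋)·M(f); consequently min(ht(g1), ht(g2)) ≤ sqrt((2/3)·C(d, ⌊d/2⌋)·M(f)). -/

import Mathlib

open Polynomial

/-- Height: maximum absolute value of a coefficient. -/
noncomputable def ht (p : Polynomial ℂ) : ℝ := ⨆ i, ‖p.coeff i‖

/-- Mahler measure `M(f) = |lc(f)| · Π max(1,|α|)` over the complex roots of `f`. -/
noncomputable def mahlerMeasure (f : Polynomial ℂ) : ℝ :=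
  ‖f.leadingCoeff‖ * ((f.roots).map (fun a => max 1 ‖a‖)).prod

/-! ### Combinatorial lemmas -/

lemma MigAux.two_term_le (m n k : ℕ) (x y : ℕ × ℕ) (hx : x.1 + x.2 = k)
    (hy : y.1 + y.2 = k) (hne : x ≠ y) :
    m.choose x.1 * n.choose x.2 + m.choose y.1 * n.choose y.2 ≤ (m + n).choose k := by
  rw [Nat.add_choose_eq]
  have hsub : ({x, y} : Finset (ℕ × ℕ)) ⊆ Finset.HasAntidiagonal.antidiagonal k := by
    intro z hz
    simp only [Finset.mem_insert, Finset.mem_singleton] at hz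
    rcases hz with rfl | rfl <;> simp [Finset.HasAntidiagonal.mem_antidiagonal, hx, hy]
  calc m.choose x.1 * n.choose x.2 + m.choose y.1 * n.choose y.2
      = ∑ ij ∈ ({x, y} : Finset (ℕ × ℕ)), m.choose ij.1 * n.choose ij.2 := by
        rw [Finset.sum_pair hne]
    _ ≤ _ := Finset.sum_le_sum_of_subset hsub

lemma MigAux.three_term_le (m n k : ℕ) (x y z : ℕ × ℕ) (hx : x.1 + x.2 = k)
    (hy : y.1 + y.2 = k) (hz : z.1 + z.2 = k) (hxy : x ≠ y) (hxz : x ≠ z) (hyz : y ≠ z) :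
    m.choose x.1 * n.choose x.2 + m.choose y.1 * n.choose y.2
      + m.choose z.1 * n.choose z.2 ≤ (m + n).choose k := by
  rw [Nat.add_choose_eq]
  have hsub : ({x, y, z} : Finset (ℕ × ℕ)) ⊆ Finset.HasAntidiagonal.antidiagonal k := by
    intro w hw
    simp only [Finset.mem_insert, Finset.mem_singleton] at hw
    rcases hw with rfl | rfl | rfl <;> simp [Finset.HasAntidiagonal.mem_antidiagonal, hx, hy, hz]
  calc m.choose x.1 * n.choose x.2 + m.choose y.1 * n.choose y.2
        + m.choose z.1 * n.choose z.2
      = ∑ ij ∈ ({x, y, z} : Finset (ℕ × ℕ)), m.choose ij.1 * n.choose ij.2 := by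
        rw [Finset.sum_insert (by simp [hxy, hxz]), Finset.sum_pair hyz, add_assoc]
    _ ≤ _ := Finset.sum_le_sum_of_subset hsub

lemma MigAux.case_ee (p q : ℕ) (hp : 1 ≤ p) (hq : 1 ≤ q) :
    3 * ((2*p).choose p * (2*q).choose q) ≤ 2 * ((2*p + 2*q).choose (p + q)) := by
  set C := (2*p).choose p with hCdef
  set D := (2*q).choose q with hDdef
  set A := (2*p).choose (p+1) with hAdef
  set B := (2*q).choose (q+1) with hBdef
  have hA : A * (p+1) = C * p := by
    have h := Nat.choose_succ_right_eq (2*p) p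
    rwa [show 2*p - p = p by omega] at h
  have hB : B * (q+1) = D * q := by
    have h := Nat.choose_succ_right_eq (2*q) q
    rwa [show 2*q - q = q by omega] at h
  have hAsymm : (2*p).choose (p-1) = A := by
    have h := Nat.choose_symm (show p+1 ≤ 2*p by omega)
    rwa [show 2*p - (p+1) = p - 1 by omega] at h
  have hBsymm : (2*q).choose (q-1) = B := by
    have h := Nat.choose_symm (show q+1 ≤ 2*q by omega)
    rwa [show 2*q - (q+1) = q - 1 by omega] at h
  have hsum := MigAux.three_term_le (2*p) (2*q) (p+q) (p-1, q+1) (p, q) (p+1, q-1)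
    (show p-1+(q+1) = p+q by omega) (show p+q = p+q from rfl) (show p+1+(q-1) = p+q by omega)
    (by simp only [ne_eq, Prod.mk.injEq, not_and]; omega)
    (by simp only [ne_eq, Prod.mk.injEq, not_and]; omega)
    (by simp only [ne_eq, Prod.mk.injEq, not_and]; omega)
  simp only [hAsymm, hBsymm] at hsum
  have hCD : C * D ≤ 4 * (A * B) := by
    have hpq : (p+1)*(q+1) ≤ 4*(p*q) := by nlinarith
    have hmul : C * D * ((p+1)*(q+1)) ≤ 4*(A*B) * ((p+1)*(q+1)) := by
      calc C * D * ((p+1)*(q+1)) ≤ C * D * (4*(p*q)) := Nat.mul_le_mul_left _ hpq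
        _ = 4 * ((C*p) * (D*q)) := by ring
        _ = 4 * ((A*(p+1)) * (B*(q+1))) := by rw [hA, hB]
        _ = 4*(A*B) * ((p+1)*(q+1)) := by ring
    exact Nat.le_of_mul_le_mul_right hmul (by positivity)
  -- hsum : A * B + C * D + A * B ≤ (2p+2q).choose (p+q)
  linarith

lemma MigAux.case_eo (p q : ℕ) (hp : 1 ≤ p) :
    3 * ((2*p).choose p * (2*q+1).choose q) ≤ 2 * ((2*p + (2*q+1)).choose (p + q)) := by
  set C := (2*p).choose p with hCdef
  set D := (2*q+1).choose q with hDdef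
  set A := (2*p).choose (p+1) with hAdef
  have hA : A * (p+1) = C * p := by
    have h := Nat.choose_succ_right_eq (2*p) p
    rwa [show 2*p - p = p by omega] at h
  have hAsymm : (2*p).choose (p-1) = A := by
    have h := Nat.choose_symm (show p+1 ≤ 2*p by omega)
    rwa [show 2*p - (p+1) = p - 1 by omega] at h
  have hDsymm : (2*q+1).choose (q+1) = D := by
    have h := Nat.choose_symm (show q+1 ≤ 2*q+1 by omega)
    rw [show 2*q+1 - (q+1) = q by omega] at h
    exact h.symm
  have hsum := MigAux.two_term_le (2*p) (2*q+1) (p+q) (p, q) (p-1, q+1)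
    (show p+q = p+q from rfl) (show p-1+(q+1) = p+q by omega)
    (by simp only [ne_eq, Prod.mk.injEq, not_and]; omega)
  simp only [hAsymm, hDsymm] at hsum
  have hC : C ≤ 2 * A := by
    have hmul : C * (p+1) ≤ 2 * A * (p+1) := by
      calc C * (p+1) ≤ C * (2*p) := Nat.mul_le_mul_left _ (by omega)
        _ = 2 * (C * p) := by ring
        _ = 2 * (A * (p+1)) := by rw [hA]
        _ = 2 * A * (p+1) := by ring
    exact Nat.le_of_mul_le_mul_right hmul (by omega)
  have hCD : C * D ≤ 2 * (A * D) := by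
    calc C * D ≤ 2 * A * D := Nat.mul_le_mul_right _ hC
      _ = 2 * (A * D) := by ring
  linarith

lemma MigAux.case_oo (p q : ℕ) :
    3 * ((2*p+1).choose p * (2*q+1).choose q) ≤ 2 * (((2*p+1) + (2*q+1)).choose (p + q + 1)) := by
  set C := (2*p+1).choose p with hCdef
  set D := (2*q+1).choose q with hDdef
  have hCsymm : (2*p+1).choose (p+1) = C := by
    have h := Nat.choose_symm (show p+1 ≤ 2*p+1 by omega)
    rw [show 2*p+1 - (p+1) = p by omega] at h
    exact h.symm
  have hDsymm : (2*q+1).choose (q+1) = D := by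
    have h := Nat.choose_symm (show q+1 ≤ 2*q+1 by omega)
    rw [show 2*q+1 - (q+1) = q by omega] at h
    exact h.symm
  have hsum := MigAux.two_term_le (2*p+1) (2*q+1) (p+q+1) (p, q+1) (p+1, q)
    (show p+(q+1) = p+q+1 by omega) (show p+1+q = p+q+1 by omega)
    (by simp only [ne_eq, Prod.mk.injEq, not_and]; omega)
  simp only [hCsymm, hDsymm] at hsum
  linarith

lemma MigAux.central (a b : ℕ) (ha : 1 ≤ a) (hb : 1 ≤ b) :
    3 * (a.choose (a/2) * b.choose (b/2)) ≤ 2 * ((a+b).choose ((a+b)/2)) := by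
  rcases Nat.even_or_odd a with ⟨p, rfl⟩ | ⟨p, rfl⟩ <;>
    rcases Nat.even_or_odd b with ⟨q, rfl⟩ | ⟨q, rfl⟩
  · rw [show p + p = 2*p by ring, show q + q = 2*q by ring,
      show (2*p)/2 = p by omega, show (2*q)/2 = q by omega,
      show (2*p + 2*q)/2 = p + q by omega]
    exact MigAux.case_ee p q (by omega) (by omega)
  · rw [show p + p = 2*p by ring, show (2*p)/2 = p by omega,
      show (2*q+1)/2 = q by omega, show (2*p + (2*q+1))/2 = p + q by omega]
    exact MigAux.case_eo p q (by omega)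
  · rw [show q + q = 2*q by ring, show (2*q)/2 = q by omega,
      show (2*p+1)/2 = p by omega, show (2*p+1 + 2*q)/2 = p + q by omega]
    have h := MigAux.case_eo q p (by omega)
    rw [show 2*q + (2*p+1) = 2*p+1 + 2*q by ring, show q + p = p + q by ring,
      mul_comm ((2*q).choose q)] at h
    exact h
  · rw [show (2*p+1)/2 = p by omega, show (2*q+1)/2 = q by omega,
      show (2*p+1 + (2*q+1))/2 = p + q + 1 by omega]
    exact MigAux.case_oo p q

/-! ### Analytic lemmas -/

lemma MigAux.abs_multiset_prod (t : Multiset ℂ) :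
    ‖t.prod‖ = (t.map (fun a : ℂ => ‖a‖)).prod := by
  induction t using Multiset.induction_on with
  | empty => simp
  | cons a t ih => simp [map_mul, ih]

lemma MigAux.abs_multiset_sum (t : Multiset ℂ) :
    ‖t.sum‖ ≤ (t.map (fun a : ℂ => ‖a‖)).sum := by
  induction t using Multiset.induction_on with
  | empty => simp
  | cons a t ih =>
    simp only [Multiset.sum_cons, Multiset.map_cons]
    exact (norm_add_le _ _).trans (by linarith)

lemma MigAux.one_le_prodF (s : Multiset ℂ) :
    (1:ℝ) ≤ (s.map (fun a => max 1 ‖a‖)).prod := by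
  apply Multiset.one_le_prod
  intro x hx
  obtain ⟨a, _, rfl⟩ := Multiset.mem_map.mp hx
  exact le_max_left _ _

lemma MigAux.subprod_le (s t : Multiset ℂ) (h : t ≤ s) :
    (t.map (fun a : ℂ => ‖a‖)).prod ≤ (s.map (fun a => max 1 ‖a‖)).prod := by
  obtain ⟨u, rfl⟩ := Multiset.le_iff_exists_add.mp h
  rw [Multiset.map_add, Multiset.prod_add]
  have h1 : (t.map (fun a : ℂ => ‖a‖)).prod ≤ (t.map (fun a => max 1 ‖a‖)).prod :=
    Multiset.prod_map_le_prod_map₀ _ _ (fun i _ => norm_nonneg _)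
      (fun i _ => le_max_right _ _)
  calc (t.map (fun a : ℂ => ‖a‖)).prod = (t.map (fun a : ℂ => ‖a‖)).prod * 1 := (mul_one _).symm
    _ ≤ (t.map (fun a => max 1 ‖a‖)).prod
          * (u.map (fun a => max 1 ‖a‖)).prod :=
      mul_le_mul h1 (MigAux.one_le_prodF u) zero_le_one
        (le_trans zero_le_one (MigAux.one_le_prodF t))

lemma MigAux.esymm_le (s : Multiset ℂ) (k : ℕ) :
    ‖s.esymm k‖ ≤
      ((Multiset.card s).choose k : ℝ) * (s.map (fun a => max 1 ‖a‖)).prod := by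
  rw [Multiset.esymm]
  refine (MigAux.abs_multiset_sum _).trans ?_
  rw [Multiset.map_map]
  have hb : ∀ x ∈ (s.powersetCard k).map ((fun a : ℂ => ‖a‖) ∘ Multiset.prod),
      x ≤ (s.map (fun a => max 1 ‖a‖)).prod := by
    intro x hx
    obtain ⟨t, ht, rfl⟩ := Multiset.mem_map.mp hx
    have hts : t ≤ s := (Multiset.mem_powersetCard.mp ht).1
    simpa [Function.comp, MigAux.abs_multiset_prod] using MigAux.subprod_le s t hts
  calc ((s.powersetCard k).map ((fun a : ℂ => ‖a‖) ∘ Multiset.prod)).sum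
      ≤ Multiset.card ((s.powersetCard k).map ((fun a : ℂ => ‖a‖) ∘ Multiset.prod))
          • (s.map (fun a => max 1 ‖a‖)).prod :=
        Multiset.sum_le_card_nsmul _ _ hb
    _ = ((Multiset.card s).choose k : ℝ) * (s.map (fun a => max 1 ‖a‖)).prod := by
        rw [Multiset.card_map, Multiset.card_powersetCard, nsmul_eq_mul]

lemma MigAux.mahler_nonneg (g : Polynomial ℂ) : 0 ≤ _root_.mahlerMeasure g :=
  mul_nonneg (norm_nonneg _) (le_trans zero_le_one (MigAux.one_le_prodF _))

lemma MigAux.mahler_mul (g1 g2 : Polynomial ℂ) (h1 : g1 ≠ 0) (h2 : g2 ≠ 0) :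
    _root_.mahlerMeasure (g1 * g2) = _root_.mahlerMeasure g1 * _root_.mahlerMeasure g2 := by
  unfold _root_.mahlerMeasure
  rw [leadingCoeff_mul, norm_mul, roots_mul (mul_ne_zero h1 h2), Multiset.map_add,
    Multiset.prod_add]
  ring

lemma MigAux.coeff_le (g : Polynomial ℂ) (hg : g ≠ 0) (i : ℕ) :
    ‖g.coeff i‖ ≤ (g.natDegree.choose (g.natDegree/2) : ℝ) * _root_.mahlerMeasure g := by
  have hRHS : 0 ≤ (g.natDegree.choose (g.natDegree/2) : ℝ) * _root_.mahlerMeasure g :=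
    mul_nonneg (Nat.cast_nonneg _) (MigAux.mahler_nonneg g)
  by_cases hi : i ≤ g.natDegree
  · have hcard : Multiset.card g.roots = g.natDegree :=
      (splits_iff_card_roots).mp (IsAlgClosed.splits g)
    have hfac : C g.leadingCoeff * (g.roots.map (fun a => X - C a)).prod = g :=
      C_leadingCoeff_mul_prod_multiset_X_sub_C hcard
    have hco : g.coeff i = g.leadingCoeff * ((g.roots.map (fun a => X - C a)).prod.coeff i) := by
      conv_lhs => rw [← hfac]
      rw [coeff_C_mul]
    rw [hco, norm_mul, Multiset.prod_X_sub_C_coeff g.roots (by rw [hcard]; exact hi),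
      norm_mul, norm_pow]
    have habs1 : ‖(-1 : ℂ)‖ = 1 := by simp
    rw [habs1, one_pow, one_mul]
    have h1 := MigAux.esymm_le g.roots (Multiset.card g.roots - i)
    have h2 : ((Multiset.card g.roots).choose (Multiset.card g.roots - i) : ℝ)
        ≤ (g.natDegree.choose (g.natDegree/2) : ℝ) := by
      rw [hcard]
      exact_mod_cast Nat.choose_le_middle _ _
    have hP : (0:ℝ) ≤ ‖g.leadingCoeff‖
        * (g.roots.map (fun a => max 1 ‖a‖)).prod :=
      mul_nonneg (norm_nonneg _) (le_trans zero_le_one (MigAux.one_le_prodF _))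
    calc ‖g.leadingCoeff‖ * ‖g.roots.esymm (Multiset.card g.roots - i)‖
        ≤ ‖g.leadingCoeff‖ *
            (((Multiset.card g.roots).choose (Multiset.card g.roots - i) : ℝ)
              * (g.roots.map (fun a => max 1 ‖a‖)).prod) :=
          mul_le_mul_of_nonneg_left h1 (norm_nonneg _)
      _ = ((Multiset.card g.roots).choose (Multiset.card g.roots - i) : ℝ)
            * (‖g.leadingCoeff‖
              * (g.roots.map (fun a => max 1 ‖a‖)).prod) := by ring
      _ ≤ (g.natDegree.choose (g.natDegree/2) : ℝ)
            * (‖g.leadingCoeff‖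
              * (g.roots.map (fun a => max 1 ‖a‖)).prod) :=
          mul_le_mul_of_nonneg_right h2 hP
      _ = (g.natDegree.choose (g.natDegree/2) : ℝ) * _root_.mahlerMeasure g := rfl
  · push_neg at hi
    rw [coeff_eq_zero_of_natDegree_lt hi]
    simpa using hRHS

lemma MigAux.ht_le (g : Polynomial ℂ) (hg : g ≠ 0) :
    ht g ≤ (g.natDegree.choose (g.natDegree/2) : ℝ) * _root_.mahlerMeasure g :=
  ciSup_le (MigAux.coeff_le g hg)

lemma MigAux.ht_bdd (g : Polynomial ℂ) (hg : g ≠ 0) :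
    BddAbove (Set.range fun i => ‖g.coeff i‖) := by
  refine ⟨(g.natDegree.choose (g.natDegree/2) : ℝ) * _root_.mahlerMeasure g, ?_⟩
  rintro x ⟨i, rfl⟩
  exact MigAux.coeff_le g hg i

lemma MigAux.ht_nonneg (g : Polynomial ℂ) (hg : g ≠ 0) : 0 ≤ ht g :=
  le_trans (norm_nonneg _) (le_ciSup (MigAux.ht_bdd g hg) 0)

/-- Mignotte-type single factor bound: for a nontrivial factorization `f = g₁ g₂`
of degree `d`, `ht(g₁)·ht(g₂) ≤ (2/3)·C(d,⌊d/2⌋)·M(f)`, hence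
`min(ht g₁, ht g₂) ≤ sqrt((2/3)·C(d,⌊d/2⌋)·M(f))`. -/
theorem single_factor_bound (g1 g2 : Polynomial ℂ)
    (h1 : 1 ≤ g1.natDegree) (h2 : 1 ≤ g2.natDegree)
    (f : Polynomial ℂ) (hf : f = g1 * g2) (d : ℕ) (hd : f.natDegree = d) :
    ht g1 * ht g2 ≤ (2 / 3) * (d.choose (d / 2)) * _root_.mahlerMeasure f ∧
    min (ht g1) (ht g2) ≤ Real.sqrt ((2 / 3) * (d.choose (d / 2)) * _root_.mahlerMeasure f) := by
  subst hf
  subst hd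
  have hg1 : g1 ≠ 0 := fun h => by simp [h] at h1
  have hg2 : g2 ≠ 0 := fun h => by simp [h] at h2
  have hdeg : (g1 * g2).natDegree = g1.natDegree + g2.natDegree := natDegree_mul hg1 hg2
  have hMf : _root_.mahlerMeasure (g1 * g2) = _root_.mahlerMeasure g1 * _root_.mahlerMeasure g2 :=
    MigAux.mahler_mul g1 g2 hg1 hg2
  have hcent := MigAux.central g1.natDegree g2.natDegree h1 h2
  have hcentR : (g1.natDegree.choose (g1.natDegree/2) : ℝ)
      * (g2.natDegree.choose (g2.natDegree/2) : ℝ)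
      ≤ 2/3 * (((g1*g2).natDegree).choose ((g1*g2).natDegree/2) : ℝ) := by
    rw [hdeg]
    have : ((3 : ℕ) : ℝ) * ((g1.natDegree.choose (g1.natDegree/2) : ℝ)
        * (g2.natDegree.choose (g2.natDegree/2) : ℝ))
        ≤ ((2:ℕ):ℝ) * (((g1.natDegree + g2.natDegree).choose
          ((g1.natDegree + g2.natDegree)/2) : ℝ)) := by
      push_cast
      exact_mod_cast hcent
    push_cast at this
    linarith
  have hb1 := MigAux.ht_le g1 hg1
  have hb2 := MigAux.ht_le g2 hg2
  have hn1 := MigAux.ht_nonneg g1 hg1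
  have hn2 := MigAux.ht_nonneg g2 hg2
  have hM1 := MigAux.mahler_nonneg g1
  have hM2 := MigAux.mahler_nonneg g2
  have hmain : ht g1 * ht g2 ≤ (2 / 3) * (((g1*g2).natDegree).choose ((g1*g2).natDegree / 2))
      * _root_.mahlerMeasure (g1 * g2) := by
    calc ht g1 * ht g2
        ≤ ((g1.natDegree.choose (g1.natDegree/2) : ℝ) * _root_.mahlerMeasure g1)
          * ((g2.natDegree.choose (g2.natDegree/2) : ℝ) * _root_.mahlerMeasure g2) :=
          mul_le_mul hb1 hb2 hn2 (mul_nonneg (Nat.cast_nonneg _) hM1)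
      _ = ((g1.natDegree.choose (g1.natDegree/2) : ℝ)
            * (g2.natDegree.choose (g2.natDegree/2) : ℝ))
          * (_root_.mahlerMeasure g1 * _root_.mahlerMeasure g2) := by ring
      _ ≤ (2/3 * (((g1*g2).natDegree).choose ((g1*g2).natDegree/2) : ℝ))
          * (_root_.mahlerMeasure g1 * _root_.mahlerMeasure g2) :=
          mul_le_mul_of_nonneg_right hcentR (mul_nonneg hM1 hM2)
      _ = (2 / 3) * (((g1*g2).natDegree).choose ((g1*g2).natDegree / 2))
          * _root_.mahlerMeasure (g1 * g2) := by rw [hMf]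
  refine ⟨hmain, ?_⟩
  have hmin0 : 0 ≤ min (ht g1) (ht g2) := le_min hn1 hn2
  have hminsq : min (ht g1) (ht g2) * min (ht g1) (ht g2) ≤ ht g1 * ht g2 :=
    mul_le_mul (min_le_left _ _) (min_le_right _ _) hmin0 hn1
  calc min (ht g1) (ht g2)
      = Real.sqrt (min (ht g1) (ht g2) * min (ht g1) (ht g2)) :=
        (Real.sqrt_mul_self hmin0).symm
    _ ≤ Real.sqrt ((2 / 3) * (((g1*g2).natDegree).choose ((g1*g2).natDegree / 2))
          * _root_.mahlerMeasure (g1 * g2)) :=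
        Real.sqrt_le_sqrt (hminsq.trans hmain)
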